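/- Let G and H be finite nonbipartite triangle-free graphs of diameter two such that every pair of vertices of G lies on a common cycle of length five and every pair of vertices of H lies on a common cycle of length five (G and H are C5-connected). Then the strong resolving graph (G × H)_SR is isomorphic to the Cartesian product G □ H; equivalently, two distinct vertices (g,h) and (g',h') of G × H are mutually maximally distant if and only if (g = g' and h is adjacent to h' in H) or (h = h' and g is adjacent to g' in G). -/

import Mathlib

open SimpleGraph

variable {V : Type*}

/-- `u` is maximally distant from `v` in `G`: every neighbor `w` of `u`
satisfies `d(v,w) ≤ d(v,u)`. -/
def MaxDistant (G : SimpleGraph V) (u v : V) : Prop :=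
  ∀ w, G.Adj u w → G.dist v w ≤ G.dist v u

/-- `u` and `v` are mutually maximally distant in `G`. -/
def MMD (G : SimpleGraph V) (u v : V) : Prop :=
  MaxDistant G u v ∧ MaxDistant G v u

/-- The boundary of `G`: vertices maximally distant from some vertex. -/
def boundary (G : SimpleGraph V) : Set V := {u | ∃ v, MaxDistant G u v}

/-- The strong resolving graph on the whole vertex set (`G_{SR+I}`):
two vertices are adjacent iff they are distinct and mutually maximally distant. -/
def srGraphI (G : SimpleGraph V) : SimpleGraph V where
  Adj u v := u ≠ v ∧ MMD G u v
  symm.symm := by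
    rintro u v ⟨hne, h1, h2⟩
    exact ⟨hne.symm, h2, h1⟩
  loopless.irrefl := by
    rintro u ⟨hne, _⟩
    exact hne rfl

/-- The strong resolving graph `G_SR`, with vertex set the boundary of `G`. -/
def srGraph (G : SimpleGraph V) : SimpleGraph (boundary G) :=
  (srGraphI G).induce (boundary G)

/-- `u` and `v` are true twins: distinct vertices with equal closed neighborhoods. -/
def TrueTwins (G : SimpleGraph V) (u v : V) : Prop :=
  u ≠ v ∧ insert u (G.neighborSet u) = insert v (G.neighborSet v)

/-- `u` and `v` are false twins: distinct vertices with equal open neighborhoods. -/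
def FalseTwins (G : SimpleGraph V) (u v : V) : Prop :=
  u ≠ v ∧ G.neighborSet u = G.neighborSet v

/-- A vertex is simplicial if its neighborhood induces a complete graph. -/
def IsSimplicial (G : SimpleGraph V) (v : V) : Prop :=
  ∀ a b, G.Adj v a → G.Adj v b → a ≠ b → G.Adj a b

/-- `w` strongly resolves `u` and `v`. -/
def StronglyResolves (G : SimpleGraph V) (w u v : V) : Prop :=
  G.dist w u = G.dist w v + G.dist v u ∨ G.dist w v = G.dist w u + G.dist u v

/-- `S` is a strong metric generator for `G`. -/
def IsStrongMetricGenerator (G : SimpleGraph V) (S : Set V) : Prop :=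
  ∀ u v : V, u ≠ v → ∃ w ∈ S, StronglyResolves G w u v

/-- The strong metric dimension of `G`. -/
noncomputable def sdim (G : SimpleGraph V) : ℕ :=
  sInf {n | ∃ S : Set V, S.ncard = n ∧ IsStrongMetricGenerator G S}

/-- `S` is a vertex cover of `H`. -/
def IsVertexCover (H : SimpleGraph V) (S : Set V) : Prop :=
  ∀ u v : V, H.Adj u v → u ∈ S ∨ v ∈ S

/-- The vertex cover number of `H`. -/
noncomputable def vertexCoverNumber (H : SimpleGraph V) : ℕ :=
  sInf {n | ∃ S : Set V, S.ncard = n ∧ _root_.IsVertexCover H S}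

/-- The graph `G*`: distinct vertices adjacent iff at distance at least two
or true twins. -/
def GStar (G : SimpleGraph V) : SimpleGraph V where
  Adj u v := u ≠ v ∧ (2 ≤ G.dist u v ∨ TrueTwins G u v)
  symm.symm := by
    rintro u v ⟨hne, h | h⟩
    · exact ⟨hne.symm, Or.inl (by rwa [G.dist_comm])⟩
    · exact ⟨hne.symm, Or.inr ⟨h.1.symm, h.2.symm⟩⟩
  loopless.irrefl := by
    rintro u ⟨hne, _⟩
    exact hne rfl

/-- The direct (tensor) product of two graphs. -/
def DirectProd {α β : Type*} (G : SimpleGraph α) (H : SimpleGraph β) :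
    SimpleGraph (α × β) where
  Adj x y := G.Adj x.1 y.1 ∧ H.Adj x.2 y.2
  symm.symm := fun _ _ h => ⟨h.1.symm, h.2.symm⟩
  loopless.irrefl := fun x h => G.loopless.irrefl x.1 h.1

/-- The strong product of two graphs. -/
def StrongProd {α β : Type*} (G : SimpleGraph α) (H : SimpleGraph β) :
    SimpleGraph (α × β) where
  Adj x y := x ≠ y ∧ (x.1 = y.1 ∨ G.Adj x.1 y.1) ∧ (x.2 = y.2 ∨ H.Adj x.2 y.2)
  symm.symm := by
    rintro x y ⟨hne, h1, h2⟩
    exact ⟨hne.symm, h1.imp Eq.symm Adj.symm, h2.imp Eq.symm Adj.symm⟩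
  loopless.irrefl := by
    rintro x ⟨hne, _⟩
    exact hne rfl

/-- The Cartesian sum (disjunctive product) of two graphs. -/
def CartSum {α β : Type*} (G : SimpleGraph α) (H : SimpleGraph β) :
    SimpleGraph (α × β) where
  Adj x y := G.Adj x.1 y.1 ∨ H.Adj x.2 y.2
  symm.symm := fun _ _ h => h.imp Adj.symm Adj.symm
  loopless.irrefl := fun x h => h.elim (G.loopless.irrefl x.1) (H.loopless.irrefl x.2)

/-- The lexicographic product of two graphs. -/
def LexProd {α β : Type*} (G : SimpleGraph α) (H : SimpleGraph β) :
    SimpleGraph (α × β) where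
  Adj x y := G.Adj x.1 y.1 ∨ (x.1 = y.1 ∧ H.Adj x.2 y.2)
  symm.symm := fun _ _ h => h.imp Adj.symm (fun h => ⟨h.1.symm, h.2.symm⟩)
  loopless.irrefl := fun x h => h.elim (G.loopless.irrefl x.1) (fun h => H.loopless.irrefl x.2 h.2)

/-- The disjoint union of `n` copies of the complete graph on `m` vertices. -/
def CopiesComplete (n m : ℕ) : SimpleGraph (Fin n × Fin m) where
  Adj x y := x.1 = y.1 ∧ x.2 ≠ y.2
  symm.symm := fun _ _ h => ⟨h.1.symm, h.2.symm⟩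
  loopless.irrefl := fun x h => h.2 rfl

/-- Every pair of vertices lies on a common cycle of length five. -/
def C5Connected (G : SimpleGraph V) : Prop :=
  ∀ u v : V, ∃ (w : V) (c : G.Walk w w), c.IsCycle ∧ c.length = 5 ∧
    u ∈ c.support ∧ v ∈ c.support


namespace Aux

variable {W : Type*} {Γ : SimpleGraph W}

lemma triangle_aux (htf : Γ.CliqueFree 3) {x y z : W}
    (h1 : Γ.Adj x y) (h2 : Γ.Adj x z) (h3 : Γ.Adj y z) : False := by
  classical
  exact htf {x, y, z} (is3Clique_triple_iff.mpr ⟨h1, h2, h3⟩)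

lemma forb_len1_self {u : W} (p : Γ.Walk u u) : p.length ≠ 1 := by
  intro h
  cases p with
  | nil => simp at h
  | cons e q =>
    cases q with
    | nil => exact Γ.irrefl e
    | cons e' q' => simp [SimpleGraph.Walk.length_cons] at h

lemma forb_len3_self (htf : Γ.CliqueFree 3) {u : W} (p : Γ.Walk u u) : p.length ≠ 3 := by
  intro h
  cases p with
  | nil => simp at h
  | cons e1 q1 =>
    cases q1 with
    | nil => simp at h
    | cons e2 q2 =>
      cases q2 with
      | nil => simp at h
      | cons e3 q3 =>
        cases q3 with
        | nil => exact triangle_aux htf e1 e3.symm e2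
        | cons e4 q4 => simp [SimpleGraph.Walk.length_cons] at h

lemma forb_len2_adj (htf : Γ.CliqueFree 3) {u v : W} (hadj : Γ.Adj u v)
    (p : Γ.Walk u v) : p.length ≠ 2 := by
  intro h
  cases p with
  | nil => simp at h
  | cons e1 q1 =>
    cases q1 with
    | nil => simp at h
    | cons e2 q2 =>
      cases q2 with
      | nil => exact triangle_aux htf e1 hadj e2
      | cons e3 q3 => simp [SimpleGraph.Walk.length_cons] at h

lemma adj_of_len1 {u v : W} (p : Γ.Walk u v) (h : p.length = 1) : Γ.Adj u v := by
  cases p with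
  | nil => simp at h
  | cons e q =>
    cases q with
    | nil => exact e
    | cons e' q' => simp [SimpleGraph.Walk.length_cons] at h

lemma walk5_decomp {u : W} (p : Γ.Walk u u) (h : p.length = 5) :
    ∃ (a b c d : W) (e1 : Γ.Adj u a) (e2 : Γ.Adj a b) (e3 : Γ.Adj b c)
      (e4 : Γ.Adj c d) (e5 : Γ.Adj d u),
      p = .cons e1 (.cons e2 (.cons e3 (.cons e4 (.cons e5 .nil)))) := by
  cases p with
  | nil => simp at h
  | cons e1 q1 =>
    cases q1 with
    | nil => simp at h
    | cons e2 q2 =>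
      cases q2 with
      | nil => simp at h
      | cons e3 q3 =>
        cases q3 with
        | nil => simp at h
        | cons e4 q4 =>
          cases q4 with
          | nil => simp at h
          | cons e5 q5 =>
            cases q5 with
            | nil => exact ⟨_, _, _, _, e1, e2, e3, e4, e5, rfl⟩
            | cons e6 q6 => simp [SimpleGraph.Walk.length_cons] at h

lemma c5_struct (hc5 : C5Connected Γ) (u v : W) :
    ∃ a b c d : W, Γ.Adj u a ∧ Γ.Adj a b ∧ Γ.Adj b c ∧ Γ.Adj c d ∧ Γ.Adj d u ∧
      a ≠ c ∧ a ≠ d ∧ b ≠ d ∧ (v = u ∨ v = a ∨ v = b ∨ v = c ∨ v = d) := by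
  obtain ⟨w, c0, hcyc, hlen, hu, hv⟩ := hc5 u v
  have hvt : v ∈ c0.support.tail := by
    by_cases hvw : v = w
    · subst hvw
      cases c0 with
      | nil => simp at hlen
      | cons e q => simp only [SimpleGraph.Walk.support_cons, List.tail_cons]; exact q.end_mem_support
    · rw [SimpleGraph.Walk.support_eq_cons] at hv
      rcases List.mem_cons.mp hv with h | h
      · exact absurd h hvw
      · exact h
  classical
  set r := c0.rotate u hu with hr
  have hrcyc : r.IsCycle := hcyc.rotate hu
  have hrlen : r.length = 5 := by
    rw [hr, SimpleGraph.Walk.rotate, SimpleGraph.Walk.length_append, Nat.add_comm,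
      ← SimpleGraph.Walk.length_append, SimpleGraph.Walk.take_spec, hlen]
  have hvr : v ∈ r.support := by
    apply List.mem_of_mem_tail
    rw [(SimpleGraph.Walk.support_rotate c0 u hu).mem_iff]
    exact hvt
  obtain ⟨a, b, c, d, e1, e2, e3, e4, e5, hp⟩ := walk5_decomp r hrlen
  have hnd := hrcyc.support_nodup
  rw [hp] at hnd hvr
  simp [SimpleGraph.Walk.support_cons] at hnd hvr
  refine ⟨a, b, c, d, e1, e2, e3, e4, e5, ?_, ?_, ?_, ?_⟩ <;> tauto


lemma exists_neighbor (hc5 : C5Connected Γ) (u : W) : ∃ a, Γ.Adj u a := by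
  obtain ⟨a, b, c, d, e1, _⟩ := c5_struct hc5 u u
  exact ⟨a, e1⟩

lemma exists_two_neighbors (hc5 : C5Connected Γ) (u : W) :
    ∃ a d, Γ.Adj u a ∧ Γ.Adj u d ∧ a ≠ d := by
  obtain ⟨a, b, c, d, e1, e2, e3, e4, e5, h13, h14, h24, _⟩ := c5_struct hc5 u u
  exact ⟨a, d, e1, e5.symm, h14⟩

lemma self_walk2 (hc5 : C5Connected Γ) (u : W) : ∃ p : Γ.Walk u u, p.length = 2 := by
  obtain ⟨a, ha⟩ := exists_neighbor hc5 u
  exact ⟨.cons ha (.cons ha.symm .nil), rfl⟩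

lemma self_walk4 (hc5 : C5Connected Γ) (u : W) : ∃ p : Γ.Walk u u, p.length = 4 := by
  obtain ⟨a, ha⟩ := exists_neighbor hc5 u
  exact ⟨.cons ha (.cons ha.symm (.cons ha (.cons ha.symm .nil))), rfl⟩

lemma adj_walk3 {u v : W} (hadj : Γ.Adj u v) : ∃ p : Γ.Walk u v, p.length = 3 :=
  ⟨.cons hadj (.cons hadj.symm (.cons hadj .nil)), rfl⟩

lemma adj_walk4 (htf : Γ.CliqueFree 3) (hc5 : C5Connected Γ) {u v : W}
    (hadj : Γ.Adj u v) : ∃ p : Γ.Walk u v, p.length = 4 := by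
  obtain ⟨a, b, c, d, e1, e2, e3, e4, e5, h13, h14, h24, hv⟩ := c5_struct hc5 u v
  rcases hv with rfl | rfl | rfl | rfl | rfl
  · exact absurd rfl hadj.ne
  · exact ⟨.cons e5.symm (.cons e4.symm (.cons e3.symm (.cons e2.symm .nil))), rfl⟩
  · exact False.elim (triangle_aux htf e1 hadj e2)
  · exact False.elim (triangle_aux htf e5.symm hadj e4.symm)
  · exact ⟨.cons e1 (.cons e2 (.cons e3 (.cons e4 .nil))), rfl⟩

lemma nonadj_common (hc5 : C5Connected Γ) {u v : W} (hne : u ≠ v)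
    (hnadj : ¬ Γ.Adj u v) : ∃ x, Γ.Adj u x ∧ Γ.Adj v x := by
  obtain ⟨a, b, c, d, e1, e2, e3, e4, e5, h13, h14, h24, hv⟩ := c5_struct hc5 u v
  rcases hv with rfl | rfl | rfl | rfl | rfl
  · exact absurd rfl hne
  · exact absurd e1 hnadj
  · exact ⟨a, e1, e2.symm⟩
  · exact ⟨d, e5.symm, e4⟩
  · exact absurd e5.symm hnadj

lemma nonadj_walk2 (hc5 : C5Connected Γ) {u v : W} (hne : u ≠ v)
    (hnadj : ¬ Γ.Adj u v) : ∃ p : Γ.Walk u v, p.length = 2 := by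
  obtain ⟨x, h1, h2⟩ := nonadj_common hc5 hne hnadj
  exact ⟨.cons h1 (.cons h2.symm .nil), rfl⟩

lemma nonadj_walk3 (hc5 : C5Connected Γ) {u v : W} (hne : u ≠ v)
    (hnadj : ¬ Γ.Adj u v) : ∃ p : Γ.Walk u v, p.length = 3 := by
  obtain ⟨a, b, c, d, e1, e2, e3, e4, e5, h13, h14, h24, hv⟩ := c5_struct hc5 u v
  rcases hv with rfl | rfl | rfl | rfl | rfl
  · exact absurd rfl hne
  · exact absurd e1 hnadj
  · exact ⟨.cons e5.symm (.cons e4.symm (.cons e3.symm .nil)), rfl⟩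
  · exact ⟨.cons e1 (.cons e2 (.cons e3 .nil)), rfl⟩
  · exact absurd e5.symm hnadj

lemma private_neighbor (htf : Γ.CliqueFree 3) (hc5 : C5Connected Γ) {u v : W}
    (hne : u ≠ v) (hnadj : ¬ Γ.Adj u v) :
    ∃ x, Γ.Adj u x ∧ x ≠ v ∧ ¬ Γ.Adj v x := by
  obtain ⟨a, b, c, d, e1, e2, e3, e4, e5, h13, h14, h24, hv⟩ := c5_struct hc5 u v
  rcases hv with rfl | rfl | rfl | rfl | rfl
  · exact absurd rfl hne
  · exact absurd e1 hnadj
  · exact ⟨d, e5.symm, fun h => h24 h.symm, fun h => triangle_aux htf e3 h e4⟩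
  · exact ⟨a, e1, fun h => h13 h, fun h => triangle_aux htf e2 h.symm e3⟩
  · exact absurd e5.symm hnadj




variable {α β : Type*} {G : SimpleGraph α} {H : SimpleGraph β}

@[simp] lemma directProd_adj {x y : α × β} :
    (DirectProd G H).Adj x y ↔ G.Adj x.1 y.1 ∧ H.Adj x.2 y.2 := Iff.rfl

def fstHom (G : SimpleGraph α) (H : SimpleGraph β) : DirectProd G H →g G :=
  ⟨Prod.fst, fun h => h.1⟩

def sndHom (G : SimpleGraph α) (H : SimpleGraph β) : DirectProd G H →g H :=
  ⟨Prod.snd, fun h => h.2⟩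

lemma proj_walkG {x y : α × β} (r : (DirectProd G H).Walk x y) :
    ∃ p : G.Walk x.1 y.1, p.length = r.length :=
  ⟨r.map (fstHom G H), r.length_map (fstHom G H)⟩

lemma proj_walkH {x y : α × β} (r : (DirectProd G H).Walk x y) :
    ∃ p : H.Walk x.2 y.2, p.length = r.length :=
  ⟨r.map (sndHom G H), r.length_map (sndHom G H)⟩

lemma prod_walk {g g' : α} (p : G.Walk g g') :
    ∀ {h h' : β} (q : H.Walk h h'), p.length = q.length →
      ∃ r : (DirectProd G H).Walk (g, h) (g', h'), r.length = p.length := by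
  induction p with
  | nil =>
    intro h h' q hl
    cases q with
    | nil => exact ⟨.nil, rfl⟩
    | cons f q' => simp at hl
  | @cons u x w e p ih =>
    intro h h' q hl
    cases q with
    | nil => simp at hl
    | @cons _ y _ f q' =>
      obtain ⟨r, hr⟩ := ih q' (by simpa using hl)
      exact ⟨.cons ⟨e, f⟩ r, congrArg (· + 1) hr⟩



lemma tri (Γ : SimpleGraph W) (u v : W) :
    u = v ∨ Γ.Adj u v ∨ (u ≠ v ∧ ¬ Γ.Adj u v) := by tauto

section Dist

variable (hGtf : G.CliqueFree 3) (hGc5 : C5Connected G)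
  (hHtf : H.CliqueFree 3) (hHc5 : C5Connected H)

lemma dist_le_of {g g' : α} {h h' : β} (p : G.Walk g g') (q : H.Walk h h')
    (hl : p.length = q.length) :
    (DirectProd G H).dist (g, h) (g', h') ≤ p.length := by
  obtain ⟨r, hr⟩ := prod_walk p q hl
  exact hr ▸ SimpleGraph.dist_le r

include hGtf hGc5 hHtf hHc5 in
lemma exists_walk_le4 (x y : α × β) :
    ∃ r : (DirectProd G H).Walk x y, r.length ≤ 4 := by
  obtain ⟨g, h⟩ := x; obtain ⟨g', h'⟩ := y
  rcases tri G g g' with rfl | hg | ⟨hg1, hg2⟩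
  · rcases tri H h h' with rfl | hh | ⟨hh1, hh2⟩
    · exact ⟨.nil, by simp⟩
    · obtain ⟨p, hp⟩ := self_walk4 hGc5 g
      obtain ⟨q, hq⟩ := adj_walk4 hHtf hHc5 hh
      obtain ⟨r, hr⟩ := prod_walk p q (by omega)
      exact ⟨r, by omega⟩
    · obtain ⟨p, hp⟩ := self_walk2 hGc5 g
      obtain ⟨q, hq⟩ := nonadj_walk2 hHc5 hh1 hh2
      obtain ⟨r, hr⟩ := prod_walk p q (by omega)
      exact ⟨r, by omega⟩
  · rcases tri H h h' with rfl | hh | ⟨hh1, hh2⟩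
    · obtain ⟨p, hp⟩ := adj_walk4 hGtf hGc5 hg
      obtain ⟨q, hq⟩ := self_walk4 hHc5 h
      obtain ⟨r, hr⟩ := prod_walk p q (by omega)
      exact ⟨r, by omega⟩
    · obtain ⟨r, hr⟩ := prod_walk (.cons hg .nil) (SimpleGraph.Walk.cons hh .nil) rfl
      exact ⟨r, by simp at hr; omega⟩
    · obtain ⟨p, hp⟩ := adj_walk3 hg
      obtain ⟨q, hq⟩ := nonadj_walk3 hHc5 hh1 hh2
      obtain ⟨r, hr⟩ := prod_walk p q (by omega)
      exact ⟨r, by omega⟩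
  · rcases tri H h h' with rfl | hh | ⟨hh1, hh2⟩
    · obtain ⟨p, hp⟩ := nonadj_walk2 hGc5 hg1 hg2
      obtain ⟨q, hq⟩ := self_walk2 hHc5 h
      obtain ⟨r, hr⟩ := prod_walk p q (by omega)
      exact ⟨r, by omega⟩
    · obtain ⟨p, hp⟩ := nonadj_walk3 hGc5 hg1 hg2
      obtain ⟨q, hq⟩ := adj_walk3 hh
      obtain ⟨r, hr⟩ := prod_walk p q (by omega)
      exact ⟨r, by omega⟩
    · obtain ⟨p, hp⟩ := nonadj_walk2 hGc5 hg1 hg2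
      obtain ⟨q, hq⟩ := nonadj_walk2 hHc5 hh1 hh2
      obtain ⟨r, hr⟩ := prod_walk p q (by omega)
      exact ⟨r, by omega⟩

include hGtf hGc5 hHtf hHc5 in
lemma dist_le_four (x y : α × β) : (DirectProd G H).dist x y ≤ 4 := by
  obtain ⟨r, hr⟩ := exists_walk_le4 hGtf hGc5 hHtf hHc5 x y
  exact le_trans (SimpleGraph.dist_le r) hr

include hGtf hGc5 hHtf hHc5 in
lemma ge_dist (x y : α × β) (k : ℕ)
    (hall : ∀ r : (DirectProd G H).Walk x y, k ≤ r.length) :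
    k ≤ (DirectProd G H).dist x y := by
  obtain ⟨r, hr⟩ := exists_walk_le4 hGtf hGc5 hHtf hHc5 x y
  obtain ⟨p, hp⟩ := (SimpleGraph.Reachable.exists_walk_length_eq_dist ⟨r⟩)
  exact hp ▸ hall p

include hGtf hGc5 hHtf hHc5 in
lemma four_le_right (g : α) {h h' : β} (hadj : H.Adj h h') :
    4 ≤ (DirectProd G H).dist (g, h) (g, h') := by
  apply ge_dist hGtf hGc5 hHtf hHc5
  intro r
  by_contra hlt
  push_neg at hlt
  obtain ⟨p, hp⟩ := proj_walkG r
  obtain ⟨q, hq⟩ := proj_walkH r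
  have h4 : r.length = 0 ∨ r.length = 1 ∨ r.length = 2 ∨ r.length = 3 := by omega
  rcases h4 with h0 | h1 | h2 | h3
  · exact hadj.ne (SimpleGraph.Walk.eq_of_length_eq_zero (hq.trans h0))
  · exact forb_len1_self p (hp.trans h1)
  · exact forb_len2_adj hHtf hadj q (hq.trans h2)
  · exact forb_len3_self hGtf p (hp.trans h3)

include hGtf hGc5 hHtf hHc5 in
lemma four_le_left {g g' : α} (hadj : G.Adj g g') (h : β) :
    4 ≤ (DirectProd G H).dist (g, h) (g', h) := by
  apply ge_dist hGtf hGc5 hHtf hHc5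
  intro r
  by_contra hlt
  push_neg at hlt
  obtain ⟨p, hp⟩ := proj_walkG r
  obtain ⟨q, hq⟩ := proj_walkH r
  have h4 : r.length = 0 ∨ r.length = 1 ∨ r.length = 2 ∨ r.length = 3 := by omega
  rcases h4 with h0 | h1 | h2 | h3
  · exact hadj.ne (SimpleGraph.Walk.eq_of_length_eq_zero (hp.trans h0))
  · exact forb_len1_self q (hq.trans h1)
  · exact forb_len2_adj hGtf hadj p (hp.trans h2)
  · exact forb_len3_self hHtf q (hq.trans h3)

include hGtf hGc5 hHtf hHc5 in
lemma three_le_an {g g' : α} {h h' : β} (hadjG : G.Adj g g')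
    (hne : h ≠ h') (hnadj : ¬ H.Adj h h') :
    3 ≤ (DirectProd G H).dist (g, h) (g', h') := by
  apply ge_dist hGtf hGc5 hHtf hHc5
  intro r
  by_contra hlt
  push_neg at hlt
  obtain ⟨p, hp⟩ := proj_walkG r
  obtain ⟨q, hq⟩ := proj_walkH r
  have h3 : r.length = 0 ∨ r.length = 1 ∨ r.length = 2 := by omega
  rcases h3 with h0 | h1 | h2
  · exact hadjG.ne (SimpleGraph.Walk.eq_of_length_eq_zero (hp.trans h0))
  · exact hnadj (adj_of_len1 q (hq.trans h1))
  · exact forb_len2_adj hGtf hadjG p (hp.trans h2)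

include hGtf hGc5 hHtf hHc5 in
lemma three_le_na {g g' : α} {h h' : β} (hne : g ≠ g') (hnadj : ¬ G.Adj g g')
    (hadjH : H.Adj h h') :
    3 ≤ (DirectProd G H).dist (g, h) (g', h') := by
  apply ge_dist hGtf hGc5 hHtf hHc5
  intro r
  by_contra hlt
  push_neg at hlt
  obtain ⟨p, hp⟩ := proj_walkG r
  obtain ⟨q, hq⟩ := proj_walkH r
  have h3 : r.length = 0 ∨ r.length = 1 ∨ r.length = 2 := by omega
  rcases h3 with h0 | h1 | h2
  · exact hadjH.ne (SimpleGraph.Walk.eq_of_length_eq_zero (hq.trans h0))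
  · exact hnadj (adj_of_len1 p (hp.trans h1))
  · exact forb_len2_adj hHtf hadjH q (hq.trans h2)

include hGtf hGc5 hHtf hHc5 in
lemma two_le_right (g : α) {h h' : β} (hne : h ≠ h') :
    2 ≤ (DirectProd G H).dist (g, h) (g, h') := by
  apply ge_dist hGtf hGc5 hHtf hHc5
  intro r
  by_contra hlt
  push_neg at hlt
  obtain ⟨p, hp⟩ := proj_walkG r
  obtain ⟨q, hq⟩ := proj_walkH r
  have h2 : r.length = 0 ∨ r.length = 1 := by omega
  rcases h2 with h0 | h1
  · exact hne (SimpleGraph.Walk.eq_of_length_eq_zero (hq.trans h0))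
  · exact forb_len1_self p (hp.trans h1)

end Dist


end Aux

theorem stmt17 {α β : Type*} [Fintype α] [Fintype β]
    (G : SimpleGraph α) (H : SimpleGraph β)
    (hGnb : ¬ G.Colorable 2) (hGtf : G.CliqueFree 3) (hGd : G.diam = 2)
    (hGc5 : C5Connected G)
    (hHnb : ¬ H.Colorable 2) (hHtf : H.CliqueFree 3) (hHd : H.diam = 2)
    (hHc5 : C5Connected H) :
    Nonempty (srGraph (DirectProd G H) ≃g G □ H) ∧
    (∀ (g g' : α) (h h' : β), (g, h) ≠ (g', h') →
      (MMD (DirectProd G H) (g, h) (g', h') ↔ (G □ H).Adj (g, h) (g', h'))) := by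
  classical
  have key : ∀ (g g' : α) (h h' : β), (g, h) ≠ (g', h') →
      (MMD (DirectProd G H) (g, h) (g', h') ↔ (G □ H).Adj (g, h) (g', h')) := by
    intro g g' h h' hne
    constructor
    · intro hmmd
      by_contra hbox
      rw [SimpleGraph.boxProd_adj] at hbox
      push_neg at hbox
      obtain ⟨hb1, hb2⟩ := hbox
      rcases Aux.tri G g g' with rfl | hg | ⟨hg1, hg2⟩
      · rcases Aux.tri H h h' with rfl | hh | ⟨hh1, hh2⟩
        · exact hne rfl
        · exact hb2 hh rfl
        · obtain ⟨g₁, hg₁⟩ := Aux.exists_neighbor hGc5 g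
          obtain ⟨x, hx1, hx2, hx3⟩ := Aux.private_neighbor hHtf hHc5 hh1 hh2
          have hle := hmmd.1 (g₁, x) ⟨hg₁, hx1⟩
          have h3 : 3 ≤ (DirectProd G H).dist (g, h') (g₁, x) :=
            Aux.three_le_an hGtf hGc5 hHtf hHc5 hg₁ (Ne.symm hx2) hx3
          have h2' : (DirectProd G H).dist (g, h') (g, h) ≤ 2 := by
            obtain ⟨p, hp⟩ := Aux.self_walk2 hGc5 g
            obtain ⟨q, hq⟩ := Aux.nonadj_walk2 hHc5 (Ne.symm hh1) (fun a => hh2 a.symm)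
            have := Aux.dist_le_of p q (by omega)
            omega
          omega
      · rcases Aux.tri H h h' with rfl | hh | ⟨hh1, hh2⟩
        · exact hb1 hg rfl
        · obtain ⟨a, d, ha, hd, had⟩ := Aux.exists_two_neighbors hHc5 h
          have hex : ∃ x, H.Adj h x ∧ x ≠ h' := by
            by_cases hah : a = h'
            · exact ⟨d, hd, fun hdh => had (hah ▸ hdh ▸ rfl)⟩
            · exact ⟨a, ha, hah⟩
          obtain ⟨x, hx1, hx2⟩ := hex
          have hle := hmmd.1 (g', x) ⟨hg, hx1⟩
          have h2 : 2 ≤ (DirectProd G H).dist (g', h') (g', x) :=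
            Aux.two_le_right hGtf hGc5 hHtf hHc5 g' (Ne.symm hx2)
          have h1 : (DirectProd G H).dist (g', h') (g, h) ≤ 1 := by
            have := Aux.dist_le_of (SimpleGraph.Walk.cons hg.symm .nil)
              (SimpleGraph.Walk.cons hh.symm .nil) rfl
            simpa using this
          omega
        · obtain ⟨x, hx1, hx2⟩ := Aux.nonadj_common hHc5 hh1 hh2
          have hle := hmmd.1 (g', x) ⟨hg, hx1⟩
          have h4 : 4 ≤ (DirectProd G H).dist (g', h') (g', x) :=
            Aux.four_le_right hGtf hGc5 hHtf hHc5 g' hx2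
          have h3 : (DirectProd G H).dist (g', h') (g, h) ≤ 3 := by
            obtain ⟨p, hp⟩ := Aux.adj_walk3 hg.symm
            obtain ⟨q, hq⟩ := Aux.nonadj_walk3 hHc5 (Ne.symm hh1) (fun a => hh2 a.symm)
            have := Aux.dist_le_of p q (by omega)
            omega
          omega
      · rcases Aux.tri H h h' with rfl | hh | ⟨hh1, hh2⟩
        · obtain ⟨h₁, hh₁⟩ := Aux.exists_neighbor hHc5 h
          obtain ⟨x, hx1, hx2, hx3⟩ := Aux.private_neighbor hGtf hGc5 hg1 hg2
          have hle := hmmd.1 (x, h₁) ⟨hx1, hh₁⟩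
          have h3 : 3 ≤ (DirectProd G H).dist (g', h) (x, h₁) :=
            Aux.three_le_na hGtf hGc5 hHtf hHc5 (Ne.symm hx2) hx3 hh₁
          have h2' : (DirectProd G H).dist (g', h) (g, h) ≤ 2 := by
            obtain ⟨p, hp⟩ := Aux.nonadj_walk2 hGc5 (Ne.symm hg1) (fun a => hg2 a.symm)
            obtain ⟨q, hq⟩ := Aux.self_walk2 hHc5 h
            have := Aux.dist_le_of p q (by omega)
            omega
          omega
        · obtain ⟨x, hx1, hx2⟩ := Aux.nonadj_common hGc5 hg1 hg2
          have hle := hmmd.1 (x, h') ⟨hx1, hh⟩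
          have h4 : 4 ≤ (DirectProd G H).dist (g', h') (x, h') :=
            Aux.four_le_left hGtf hGc5 hHtf hHc5 hx2 h'
          have h3 : (DirectProd G H).dist (g', h') (g, h) ≤ 3 := by
            obtain ⟨p, hp⟩ := Aux.nonadj_walk3 hGc5 (Ne.symm hg1) (fun a => hg2 a.symm)
            obtain ⟨q, hq⟩ := Aux.adj_walk3 hh.symm
            have := Aux.dist_le_of p q (by omega)
            omega
          omega
        · obtain ⟨x, hx1, hx2⟩ := Aux.nonadj_common hGc5 hg1 hg2
          obtain ⟨y, hy1, hy2, hy3⟩ := Aux.private_neighbor hHtf hHc5 hh1 hh2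
          have hle := hmmd.1 (x, y) ⟨hx1, hy1⟩
          have h3 : 3 ≤ (DirectProd G H).dist (g', h') (x, y) :=
            Aux.three_le_an hGtf hGc5 hHtf hHc5 hx2 (Ne.symm hy2) hy3
          have h2' : (DirectProd G H).dist (g', h') (g, h) ≤ 2 := by
            obtain ⟨p, hp⟩ := Aux.nonadj_walk2 hGc5 (Ne.symm hg1) (fun a => hg2 a.symm)
            obtain ⟨q, hq⟩ := Aux.nonadj_walk2 hHc5 (Ne.symm hh1) (fun a => hh2 a.symm)
            have := Aux.dist_le_of p q (by omega)
            omega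
          omega
    · intro hbox
      rw [SimpleGraph.boxProd_adj] at hbox
      rcases hbox with ⟨hg, hh⟩ | ⟨hh, hg⟩
      · simp only at hh
        subst hh
        constructor
        · intro w hw
          exact le_trans (Aux.dist_le_four hGtf hGc5 hHtf hHc5 _ _)
            (Aux.four_le_left hGtf hGc5 hHtf hHc5 hg.symm h)
        · intro w hw
          exact le_trans (Aux.dist_le_four hGtf hGc5 hHtf hHc5 _ _)
            (Aux.four_le_left hGtf hGc5 hHtf hHc5 hg h)
      · simp only at hg
        subst hg
        constructor
        · intro w hw
          exact le_trans (Aux.dist_le_four hGtf hGc5 hHtf hHc5 _ _)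
            (Aux.four_le_right hGtf hGc5 hHtf hHc5 g hh.symm)
        · intro w hw
          exact le_trans (Aux.dist_le_four hGtf hGc5 hHtf hHc5 _ _)
            (Aux.four_le_right hGtf hGc5 hHtf hHc5 g hh)
  have hbound : ∀ x : α × β, x ∈ boundary (DirectProd G H) := by
    rintro ⟨g, h⟩
    obtain ⟨a, ha⟩ := Aux.exists_neighbor hHc5 h
    exact ⟨(g, a), fun w _ => le_trans (Aux.dist_le_four hGtf hGc5 hHtf hHc5 _ _)
      (Aux.four_le_right hGtf hGc5 hHtf hHc5 g ha.symm)⟩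
  refine ⟨⟨{ toEquiv := Equiv.subtypeUnivEquiv hbound, map_rel_iff' := ?_ }⟩, key⟩
  rintro ⟨⟨g, h⟩, hx⟩ ⟨⟨g', h'⟩, hy⟩
  simp only [Equiv.subtypeUnivEquiv, Equiv.coe_fn_mk]
  show (G □ H).Adj (g, h) (g', h') ↔ (srGraph (DirectProd G H)).Adj ⟨(g, h), hx⟩ ⟨(g', h'), hy⟩
  constructor
  · intro hadj
    have hne : ((g, h) : α × β) ≠ (g', h') := hadj.ne
    exact ⟨hne, (key g g' h h' hne).mpr hadj⟩
  · rintro ⟨hne, hmmd⟩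
    exact (key g g' h h' hne).mp hmmd
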